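/- Let G be a reflexive digraph and D a non-contractible reflexive digraph cycle. Then any non-refinable edge φφ' of Hom(G,D) is either an up edge or a down edge. -/
import Mathlib


open scoped Classical

namespace Recon

/-- Orientation letters for edges of a digraph cycle: `+`, `-`, `*`. -/
inductive Orient : Type
  | plus
  | minus
  | star
deriving DecidableEq

/-- A forward arc is allowed along an edge with this orientation letter. -/
def Orient.fwd : Orient → Prop
  | Orient.plus => True
  | Orient.minus => False
  | Orient.star => True

/-- A backward arc is allowed along an edge with this orientation letter. -/
def Orient.bwd : Orient → Prop
  | Orient.plus => False
  | Orient.minus => True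
  | Orient.star => True

/-- The arc relation of the reflexive digraph cycle on `ZMod m` whose orientation
string is `f`, where `f c` is the orientation of the edge from `c` to `c + 1`. -/
def cycRel {m : ℕ} (f : ZMod m → Orient) (u v : ZMod m) : Prop :=
  u = v ∨ (v = u + 1 ∧ (f u).fwd) ∨ (u = v + 1 ∧ (f v).bwd)

/-- `φ` is a digraph homomorphism. -/
def IsHom {α β : Type*} (rG : α → α → Prop) (rH : β → β → Prop) (φ : α → β) : Prop :=
  ∀ u v, rG u v → rH (φ u) (φ v)

/-- The arc relation of the Hom-graph `Hom(G,H)`. -/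
def HomArc {α β : Type*} (rG : α → α → Prop) (rH : β → β → Prop) (φ ψ : α → β) : Prop :=
  ∀ u v, rG u v → rH (φ u) (ψ v)

/-- `φψ` is an edge of the Hom-graph. -/
def HomEdge {α β : Type*} (rG : α → α → Prop) (rH : β → β → Prop) (φ ψ : α → β) : Prop :=
  HomArc rG rH φ ψ ∨ HomArc rG rH ψ φ

/-- The contribution of the edge `c (c+1)` of `C` to the increase of `φ`:
`1` if increasing, `-1` if decreasing, `0` if stationary. -/
def edgeVal {m n : ℕ} (φ : ZMod m → ZMod n) (c : ZMod m) : ℤ :=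
  if φ (c + 1) = φ c + 1 then 1 else if φ (c + 1) = φ c - 1 then -1 else 0

/-- The increase of a map between cycles: #increasing − #decreasing edges. -/
def increase {m n : ℕ} (φ : ZMod m → ZMod n) : ℤ :=
  ∑ j ∈ Finset.range m, edgeVal φ ((j : ℕ) : ZMod m)

/-- The increase of the subpath `c_a … c_{a+L}`. -/
def partialInc {m n : ℕ} (φ : ZMod m → ZMod n) (a : ZMod m) (L : ℕ) : ℤ :=
  ∑ j ∈ Finset.range L, edgeVal φ (a + ((j : ℕ) : ZMod m))

/-- `φ` has wind `w`, i.e. its increase is `w * n`. -/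
def HasWind {m n : ℕ} (φ : ZMod m → ZMod n) (w : ℤ) : Prop :=
  increase φ = w * (n : ℤ)

/-- A reflexive digraph cycle is non-contractible if it has length at least 4
or is a directed 3-cycle. -/
def NonContractible {n : ℕ} (f : ZMod n → Orient) : Prop :=
  4 ≤ n ∨ (n = 3 ∧ ((∀ i, f i = Orient.plus) ∨ (∀ i, f i = Orient.minus)))

/-- `φ` is increasing: every edge increasing or stationary, not all stationary. -/
def IncMap {m n : ℕ} (φ : ZMod m → ZMod n) : Prop :=
  (∀ c, φ (c + 1) = φ c + 1 ∨ φ (c + 1) = φ c) ∧ ∃ c, φ (c + 1) = φ c + 1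

/-- `φ` is decreasing: every edge decreasing. -/
def DecMap {m n : ℕ} (φ : ZMod m → ZMod n) : Prop :=
  ∀ c, φ (c + 1) = φ c - 1

/-- `φ` is monotone: increasing or decreasing. -/
def MonMap {m n : ℕ} (φ : ZMod m → ZMod n) : Prop :=
  IncMap φ ∨ DecMap φ

/-- `φ` is monotone in the weak sense where constant maps also count. -/
def MonOrConst {m n : ℕ} (φ : ZMod m → ZMod n) : Prop :=
  (∀ c, φ (c + 1) = φ c + 1 ∨ φ (c + 1) = φ c) ∨ DecMap φ

/-- `Y ≤* X`: `Y` is a `*`-substring of `X`, via a strictly increasing selection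
function `α` with `Y i = X (α i)` unless `Y i = *`. -/
def StarSub {p q : ℕ} (Y : Fin p → Orient) (X : Fin q → Orient) : Prop :=
  ∃ α : Fin p → Fin q, StrictMono α ∧ ∀ i, Y i = X (α i) ∨ Y i = Orient.star

/-- The orientation string of the (pointed) cycle `f`. -/
def cycStr {m : ℕ} (f : ZMod m → Orient) : Fin m → Orient :=
  fun j => f ((j : ℕ) : ZMod m)

/-- The orientation string `σ^i(Y^k)` = `(σ^i Y)^k`: the `i`-th shift of the
`k`-fold concatenation of the string of the cycle `fY`. -/
def shiftPowStr {s : ℕ} (fY : ZMod s → Orient) (k : ℕ) (i : ZMod s) :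
    Fin (k * s) → Orient :=
  fun j => fY (i + ((j : ℕ) : ZMod s))

/-- The orientation string `σ^i(Y)^k y_{i+1}` : the `i`-th shift of the `k`-fold
concatenation of the string of `fY`, extended by its own first letter. -/
def shiftPowExtStr {s : ℕ} (fY : ZMod s → Orient) (k : ℕ) (i : ZMod s) :
    Fin (k * s + 1) → Orient :=
  fun j => fY (i + ((j : ℕ) : ZMod s))

/-- Every vertex that moves from `φ` to `ψ`, moves up. -/
def MovesUpOnly {m n : ℕ} (φ ψ : ZMod m → ZMod n) : Prop :=
  ∀ c, ψ c = φ c ∨ ψ c = φ c + 1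

/-- Every vertex that moves from `φ` to `ψ`, moves down. -/
def MovesDownOnly {m n : ℕ} (φ ψ : ZMod m → ZMod n) : Prop :=
  ∀ c, ψ c = φ c ∨ ψ c = φ c - 1

/-- `φψ` is an up edge of the Hom-graph. -/
def UpEdge {m n : ℕ} (rC : ZMod m → ZMod m → Prop) (rD : ZMod n → ZMod n → Prop)
    (φ ψ : ZMod m → ZMod n) : Prop :=
  HomEdge rC rD φ ψ ∧ MovesUpOnly φ ψ

/-- `φ` and `ψ` are joined by a path (walk) inside the induced subgraph on `S`. -/
def ConnIn {m n : ℕ} (rC : ZMod m → ZMod m → Prop) (rD : ZMod n → ZMod n → Prop)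
    (S : Set (ZMod m → ZMod n)) (φ ψ : ZMod m → ZMod n) : Prop :=
  Relation.ReflTransGen (fun a b => a ∈ S ∧ b ∈ S ∧ HomEdge rC rD a b) φ ψ

/-- `ψ` is reachable from `φ` by a path of up edges inside `S`. -/
def UpReachIn {m n : ℕ} (rC : ZMod m → ZMod m → Prop) (rD : ZMod n → ZMod n → Prop)
    (S : Set (ZMod m → ZMod n)) (φ ψ : ZMod m → ZMod n) : Prop :=
  Relation.ReflTransGen (fun a b => a ∈ S ∧ b ∈ S ∧ UpEdge rC rD a b) φ ψ

/-- One step of a path of up edges between homomorphisms. -/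
def UpStep {m n : ℕ} (rC : ZMod m → ZMod m → Prop) (rD : ZMod n → ZMod n → Prop)
    (φ ψ : ZMod m → ZMod n) : Prop :=
  IsHom rC rD φ ∧ IsHom rC rD ψ ∧ UpEdge rC rD φ ψ

/-- The set of vertices on which `φ` and `φ'` differ. -/
def Neq {α β : Type*} (φ φ' : α → β) : Set α := {g | φ g ≠ φ' g}

/-- The map `φ_T`, agreeing with `φ'` on `T` and with `φ` elsewhere. -/
noncomputable def refineMap {α β : Type*} (φ φ' : α → β) (T : Set α) : α → β :=
  fun g => if g ∈ T then φ' g else φ g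

/-- The edge `φφ'` is non-refinable: no nonempty proper subset `T` of `Neq φ φ'`
yields a homomorphism `φ_T`. -/
def NonRefinable {α β : Type*} (rG : α → α → Prop) (rH : β → β → Prop)
    (φ φ' : α → β) : Prop :=
  ¬ ∃ T : Set α, T.Nonempty ∧ T ⊂ Neq φ φ' ∧ IsHom rG rH (refineMap φ φ' T)

/-- `T` is a strong component of the digraph `r`. -/
def IsStrongComponent {α : Type*} (r : α → α → Prop) (T : Set α) : Prop :=
  T.Nonempty ∧ (∀ u ∈ T, ∀ v ∈ T, Relation.ReflTransGen r u v) ∧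
    ∀ T' : Set α, T ⊆ T' → (∀ u ∈ T', ∀ v ∈ T', Relation.ReflTransGen r u v) → T' = T

/-- `T` has no arcs out to vertices not in `T`. -/
def IsTerminal {α : Type*} (r : α → α → Prop) (T : Set α) : Prop :=
  ∀ u ∈ T, ∀ v, r u v → v ∈ T

/-- `Mon_1(C,D;i)`: monotone wind-1 homomorphisms `φ` with `φ c₀ = i`. -/
def Mon1 {m n : ℕ} (fC : ZMod m → Orient) (fD : ZMod n → Orient) (i : ZMod n) :
    Set (ZMod m → ZMod n) :=
  {φ | IsHom (cycRel fC) (cycRel fD) φ ∧ MonMap φ ∧ increase φ = (n : ℤ) ∧ φ 0 = i}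

/-- A one-step up edge: an edge from `φ` obtained by moving all the vertices of a
subpath of `C` mapped to a single vertex `d` up to `d + 1`. -/
def OneStepUp {m n : ℕ} (rC : ZMod m → ZMod m → Prop) (rD : ZMod n → ZMod n → Prop)
    (φ φ' : ZMod m → ZMod n) : Prop :=
  HomEdge rC rD φ φ' ∧
    ∃ (a : ZMod m) (k : ℕ) (d : ZMod n), k < m ∧
      (∀ j : ℕ, j ≤ k → φ (a + ((j : ℕ) : ZMod m)) = d) ∧
      ∀ c, φ' c = if ∃ j : ℕ, j ≤ k ∧ c = a + ((j : ℕ) : ZMod m) then d + 1 else φ c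

/-- The number of increasing edges of `φ` among the first `j` edges of `C`. -/
def incBefore {m n : ℕ} (φ : ZMod m → ZMod n) (j : ℕ) : ℕ :=
  ((Finset.range j).filter fun t =>
    φ (((t : ℕ) : ZMod m) + 1) = φ ((t : ℕ) : ZMod m) + 1).card

/-- One cutback-pushing step: `φ'` is obtained from `φ` by replacing the values of
`φ` on a cutback `c_a … c_{a+L}` by `φ a`. -/
def CutbackStep {m n : ℕ} (φ φ' : ZMod m → ZMod n) : Prop :=
  ∃ (a : ZMod m) (L : ℕ), L < m ∧ partialInc φ a L = 0 ∧
    (∀ j : ℕ, 0 < j → j < L → partialInc φ a j < 0) ∧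
    ∀ c, φ' c = if ∃ j : ℕ, j ≤ L ∧ c = a + ((j : ℕ) : ZMod m) then φ a else φ c

/-- `Mon_1^+(C,D;i)`: wind-1 homomorphisms whose monotone push-up is in `Mon_1(C,D;i)`. -/
def Mon1Plus {m n : ℕ} (fC : ZMod m → Orient) (fD : ZMod n → Orient) (i : ZMod n) :
    Set (ZMod m → ZMod n) :=
  {φ | IsHom (cycRel fC) (cycRel fD) φ ∧ increase φ = (n : ℤ) ∧
    ∃ ψ ∈ Mon1 fC fD i, Relation.ReflTransGen CutbackStep φ ψ}

lemma cycRel_cases {n : ℕ} (f : ZMod n → Orient) {x y : ZMod n} (h : cycRel f x y) :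
    y = x ∨ y = x + 1 ∨ y = x - 1 := by
  rcases h with h | ⟨h, _⟩ | ⟨h, _⟩
  · exact Or.inl h.symm
  · exact Or.inr (Or.inl h)
  · exact Or.inr (Or.inr (by linear_combination -h))

lemma key1 {n : ℕ} (fD : ZMod n → Orient)
    (h1 : (1 : ZMod n) ≠ 0) (h2 : (2 : ZMod n) ≠ 0) (h3 : (3 : ZMod n) ≠ 0)
    {a b : ZMod n}
    (hB : cycRel fD a b) (hA : cycRel fD a (b - 1)) (hC : cycRel fD (a + 1) (b - 1)) :
    b = a + 1 := by
  rcases cycRel_cases fD hB with hb | hb | hb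
  · rcases cycRel_cases fD hC with hc | hc | hc
    · exact absurd (show (2 : ZMod n) = 0 by linear_combination hb - hc) h2
    · exact absurd (show (3 : ZMod n) = 0 by linear_combination hb - hc) h3
    · exact absurd (show (1 : ZMod n) = 0 by linear_combination hb - hc) h1
  · exact hb
  · rcases cycRel_cases fD hA with ha | ha | ha
    · exact absurd (show (2 : ZMod n) = 0 by linear_combination hb - ha) h2
    · exact absurd (show (3 : ZMod n) = 0 by linear_combination hb - ha) h3
    · exact absurd (show (1 : ZMod n) = 0 by linear_combination hb - ha) h1

lemma key2 {n : ℕ} (fD : ZMod n → Orient)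
    (h1 : (1 : ZMod n) ≠ 0) (h2 : (2 : ZMod n) ≠ 0) (h3 : (3 : ZMod n) ≠ 0)
    {a b : ZMod n}
    (hB : cycRel fD a b) (hA : cycRel fD (a + 1) b) (hC : cycRel fD (a + 1) (b - 1)) :
    b = a + 1 := by
  rcases cycRel_cases fD hB with hb | hb | hb
  · rcases cycRel_cases fD hC with hc | hc | hc
    · exact absurd (show (2 : ZMod n) = 0 by linear_combination hb - hc) h2
    · exact absurd (show (3 : ZMod n) = 0 by linear_combination hb - hc) h3
    · exact absurd (show (1 : ZMod n) = 0 by linear_combination hb - hc) h1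
  · exact hb
  · rcases cycRel_cases fD hA with ha | ha | ha
    · exact absurd (show (2 : ZMod n) = 0 by linear_combination hb - ha) h2
    · exact absurd (show (3 : ZMod n) = 0 by linear_combination hb - ha) h3
    · exact absurd (show (1 : ZMod n) = 0 by linear_combination hb - ha) h1

/-- for a reflexive digraph `G` and a non-contractible reflexive
digraph cycle `D`, any non-refinable edge of `Hom(G,D)` is an up edge or a down
edge. -/
theorem nonrefinable_up_or_down {α : Type*} (rG : α → α → Prop) (hrefl : ∀ g, rG g g)
    (n : ℕ) (fD : ZMod n → Orient) (hD : NonContractible fD)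
    (φ φ' : α → ZMod n)
    (hφ : IsHom rG (cycRel fD) φ) (hφ' : IsHom rG (cycRel fD) φ')
    (hedge : HomEdge rG (cycRel fD) φ φ')
    (hnr : NonRefinable rG (cycRel fD) φ φ') :
    (∀ g, φ' g = φ g ∨ φ' g = φ g + 1) ∨ (∀ g, φ' g = φ g ∨ φ' g = φ g - 1) := by
  rcases hD with hn | ⟨hn3, hdir⟩
  · -- n ≥ 4
    haveI : NeZero n := ⟨by omega⟩
    have hcast : ∀ k : ℕ, 0 < k → k < n → ((k : ZMod n) ≠ 0) := by
      intro k hk hkn h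
      have := ZMod.val_cast_of_lt hkn
      rw [h, ZMod.val_zero] at this
      omega
    have h1 : (1 : ZMod n) ≠ 0 := by have := hcast 1 (by omega) (by omega); simpa using this
    have h2 : (2 : ZMod n) ≠ 0 := by have := hcast 2 (by omega) (by omega); simpa using this
    have h3 : (3 : ZMod n) ≠ 0 := by have := hcast 3 (by omega) (by omega); simpa using this
    by_contra hcon
    push_neg at hcon
    obtain ⟨⟨g1, hg1a, hg1b⟩, ⟨g2, hg2a, hg2b⟩⟩ := hcon
    rcases hedge with harc | harc
    · -- arc φ → φ'
      have tri : ∀ g, φ' g = φ g ∨ φ' g = φ g + 1 ∨ φ' g = φ g - 1 :=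
        fun g => cycRel_cases fD (harc g g (hrefl g))
      have hg1 : φ' g1 = φ g1 - 1 := by
        rcases tri g1 with h | h | h
        · exact absurd h hg1a
        · exact absurd h hg1b
        · exact h
      have hg2 : φ' g2 = φ g2 + 1 := by
        rcases tri g2 with h | h | h
        · exact absurd h hg2a
        · exact h
        · exact absurd h hg2b
      apply hnr
      refine ⟨{g | φ' g = φ g + 1}, ⟨g2, hg2⟩, ?_, ?_⟩
      · rw [Set.ssubset_def]
        constructor
        · intro g hg
          simp only [Set.mem_setOf_eq] at hg
          intro heq
          exact h1 (by linear_combination -hg - heq)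
        · intro hsup
          have hg1mem : g1 ∈ Neq φ φ' := by
            intro heq
            exact h1 (by linear_combination heq + hg1)
          have := hsup hg1mem
          simp only [Set.mem_setOf_eq] at this
          exact h2 (by linear_combination hg1 - this)
      · intro u v huv
        simp only [refineMap, Set.mem_setOf_eq]
        by_cases hu : φ' u = φ u + 1 <;> by_cases hv : φ' v = φ v + 1
        · rw [if_pos hu, if_pos hv]; exact hφ' u v huv
        · -- u moves up, v does not move up
          rw [if_pos hu, if_neg hv]
          rcases tri v with hv0 | hv1 | hv2
          · rw [← hv0]; exact hφ' u v huv
          · exact absurd hv1 hv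
          · have hB := hφ u v huv
            have hA : cycRel fD (φ u) (φ v - 1) := by rw [← hv2]; exact harc u v huv
            have hC : cycRel fD (φ u + 1) (φ v - 1) := by
              rw [← hu, ← hv2]; exact hφ' u v huv
            have := key1 fD h1 h2 h3 hB hA hC
            rw [hu, this]
            exact Or.inl rfl
        · rw [if_neg hu, if_pos hv]; exact harc u v huv
        · rw [if_neg hu, if_neg hv]; exact hφ u v huv
    · -- arc φ' → φ
      have tri : ∀ g, φ' g = φ g ∨ φ' g = φ g + 1 ∨ φ' g = φ g - 1 := by
        intro g
        rcases cycRel_cases fD (harc g g (hrefl g)) with h | h | h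
        · exact Or.inl h.symm
        · exact Or.inr (Or.inr (by linear_combination -h))
        · exact Or.inr (Or.inl (by linear_combination -h))
      have hg1 : φ' g1 = φ g1 - 1 := by
        rcases tri g1 with h | h | h
        · exact absurd h hg1a
        · exact absurd h hg1b
        · exact h
      have hg2 : φ' g2 = φ g2 + 1 := by
        rcases tri g2 with h | h | h
        · exact absurd h hg2a
        · exact h
        · exact absurd h hg2b
      apply hnr
      refine ⟨{g | φ' g = φ g - 1}, ⟨g1, hg1⟩, ?_, ?_⟩
      · rw [Set.ssubset_def]
        constructor
        · intro g hg
          simp only [Set.mem_setOf_eq] at hg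
          intro heq
          exact h1 (by linear_combination heq + hg)
        · intro hsup
          have hg2mem : g2 ∈ Neq φ φ' := by
            intro heq
            exact h1 (by linear_combination -hg2 - heq)
          have := hsup hg2mem
          simp only [Set.mem_setOf_eq] at this
          exact h2 (by linear_combination this - hg2)
      · intro u v huv
        simp only [refineMap, Set.mem_setOf_eq]
        by_cases hu : φ' u = φ u - 1 <;> by_cases hv : φ' v = φ v - 1
        · rw [if_pos hu, if_pos hv]; exact hφ' u v huv
        · rw [if_pos hu, if_neg hv]; exact harc u v huv
        · -- v moves down, u does not move down
          rw [if_neg hu, if_pos hv]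
          rcases tri u with hu0 | hu1 | hu2
          · rw [← hu0]; exact hφ' u v huv
          · have hB := hφ u v huv
            have hA : cycRel fD (φ u + 1) (φ v) := by rw [← hu1]; exact harc u v huv
            have hC : cycRel fD (φ u + 1) (φ v - 1) := by
              rw [← hu1, ← hv]; exact hφ' u v huv
            have heq := key2 fD h1 h2 h3 hB hA hC
            have hfin : φ v - 1 = φ u := by linear_combination heq
            rw [hv, hfin]
            exact Or.inl rfl
          · exact absurd hu2 hu
        · rw [if_neg hu, if_neg hv]; exact hφ u v huv
  · -- n = 3, directed
    subst hn3
    rcases hdir with hor | hor <;> rcases hedge with harc | harc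
    · left
      intro g
      rcases harc g g (hrefl g) with h | ⟨h, _⟩ | ⟨_, hb⟩
      · exact Or.inl h.symm
      · exact Or.inr h
      · rw [hor] at hb; exact absurd hb (by simp [Orient.bwd])
    · right
      intro g
      rcases harc g g (hrefl g) with h | ⟨h, _⟩ | ⟨_, hb⟩
      · exact Or.inl h
      · exact Or.inr (by linear_combination -h)
      · rw [hor] at hb; exact absurd hb (by simp [Orient.bwd])
    · right
      intro g
      rcases harc g g (hrefl g) with h | ⟨_, hf⟩ | ⟨h, _⟩
      · exact Or.inl h.symm
      · rw [hor] at hf; exact absurd hf (by simp [Orient.fwd])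
      · exact Or.inr (by linear_combination -h)
    · left
      intro g
      rcases harc g g (hrefl g) with h | ⟨_, hf⟩ | ⟨h, _⟩
      · exact Or.inl h
      · rw [hor] at hf; exact absurd hf (by simp [Orient.fwd])
      · exact Or.inr (by linear_combination h)

end Recon
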